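/- The map T : (u,v) ↦ (s,t) = (u, (|u|² + v²)/2) is a bijection from the upper half space {(u,v) ∈ ℝ^{n-1}×ℝ : v > 0} onto the epiparabola W = {(s,t) : t > |s|²/2}, and the image under T of every geodesic of the hyperbolic (Poincaré) metric ds² = (|du|² + dv²)/v² is the intersection with W of a Euclidean straight line; conversely every straight line meeting W arises this way. -/

import Mathlib

open scoped RealInnerProductSpace

/-- A straight line in a real vector space. -/
def stmt6.IsLine {V : Type*} [AddCommGroup V] [Module ℝ V] (ℓ : Set V) : Prop :=
  ∃ q d : V, d ≠ 0 ∧ ℓ = {x | ∃ t : ℝ, x = q + t • d}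

/-- Geodesics of the Poincaré metric on the upper half space: vertical half-lines
and vertical semicircles with center on the hyperplane. -/
def stmt6.IsGeodesic {m : ℕ} (γ : Set (EuclideanSpace ℝ (Fin m) × ℝ)) : Prop :=
  (∃ u₀ : EuclideanSpace ℝ (Fin m), γ = {p | p.1 = u₀ ∧ 0 < p.2}) ∨
  (∃ (L : Set (EuclideanSpace ℝ (Fin m))) (a : EuclideanSpace ℝ (Fin m)) (r : ℝ),
      stmt6.IsLine L ∧ a ∈ L ∧ 0 < r ∧
      γ = {p | p.1 ∈ L ∧ 0 < p.2 ∧ ‖p.1 - a‖ ^ 2 + p.2 ^ 2 = r ^ 2})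

namespace stmt6aux

variable {m : ℕ}

local notation "E" => EuclideanSpace ℝ (Fin m)

lemma exists_v (u : E) (t : ℝ) (h : ‖u‖ ^ 2 / 2 < t) :
    ∃ v : ℝ, 0 < v ∧ v ^ 2 = 2 * t - ‖u‖ ^ 2 :=
  ⟨Real.sqrt (2 * t - ‖u‖ ^ 2), Real.sqrt_pos.mpr (by linarith),
    Real.sq_sqrt (by linarith)⟩

lemma norm_sub_sq' (u a : E) :
    ‖u - a‖ ^ 2 = ‖u‖ ^ 2 - 2 * ⟪u, a⟫ + ‖a‖ ^ 2 := by
  rw [norm_sub_sq_real]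

/-- The image under `T` of the semicircle over `L` centered at `a` with radius `r`
is the graph of `u ↦ ⟪u,a⟫ + (r²-‖a‖²)/2` over `L`, intersected with `W`. -/
lemma semicircle_image (T : E × ℝ → E × ℝ)
    (hT : ∀ p, T p = (p.1, (‖p.1‖ ^ 2 + p.2 ^ 2) / 2))
    (L : Set E) (a : E) (r : ℝ) :
    T '' {p : E × ℝ | p.1 ∈ L ∧ 0 < p.2 ∧ ‖p.1 - a‖ ^ 2 + p.2 ^ 2 = r ^ 2} =
      {q : E × ℝ | q.1 ∈ L ∧ q.2 = ⟪q.1, a⟫ + (r ^ 2 - ‖a‖ ^ 2) / 2} ∩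
        {q : E × ℝ | ‖q.1‖ ^ 2 / 2 < q.2} := by
  ext q
  constructor
  · rintro ⟨p, ⟨hL, hv, hc⟩, rfl⟩
    have hn := norm_sub_sq' p.1 a
    have hv2 : 0 < p.2 ^ 2 := pow_pos hv 2
    rw [hT]
    constructor
    · show p.1 ∈ L ∧ (‖p.1‖ ^ 2 + p.2 ^ 2) / 2 = ⟪p.1, a⟫ + (r ^ 2 - ‖a‖ ^ 2) / 2
      exact ⟨hL, by linarith⟩
    · show ‖p.1‖ ^ 2 / 2 < (‖p.1‖ ^ 2 + p.2 ^ 2) / 2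
      linarith
  · rintro ⟨⟨hL, ht⟩, hWq⟩
    obtain ⟨v, hv, hv2⟩ := exists_v q.1 q.2 hWq
    have hn := norm_sub_sq' q.1 a
    refine ⟨(q.1, v), ⟨hL, hv, by show ‖q.1 - a‖ ^ 2 + v ^ 2 = r ^ 2; linarith⟩, ?_⟩
    rw [hT]
    exact Prod.ext rfl (by show (‖q.1‖ ^ 2 + v ^ 2) / 2 = q.2; linarith)

lemma graph_isLine (L : Set E) (hL : stmt6.IsLine L) (a : E) (c : ℝ) :
    stmt6.IsLine {q : E × ℝ | q.1 ∈ L ∧ q.2 = ⟪q.1, a⟫ + c} := by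
  obtain ⟨b, e, he, rfl⟩ := hL
  refine ⟨(b, ⟪b, a⟫ + c), (e, ⟪e, a⟫), fun h => he (congrArg Prod.fst h), ?_⟩
  ext q
  simp only [Set.mem_setOf_eq, Prod.ext_iff, Prod.fst_add, Prod.snd_add,
    Prod.smul_fst, Prod.smul_snd, smul_eq_mul]
  constructor
  · rintro ⟨⟨t, hq1⟩, hq2⟩
    refine ⟨t, hq1, ?_⟩
    rw [hq2, hq1, inner_add_left, real_inner_smul_left]
    ring
  · rintro ⟨t, hq1, hq2⟩
    refine ⟨⟨t, hq1⟩, ?_⟩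
    rw [hq2, hq1, inner_add_left, real_inner_smul_left]
    ring

lemma vertical_image (T : E × ℝ → E × ℝ)
    (hT : ∀ p, T p = (p.1, (‖p.1‖ ^ 2 + p.2 ^ 2) / 2)) (u₀ : E) :
    T '' {p : E × ℝ | p.1 = u₀ ∧ 0 < p.2} =
      {q : E × ℝ | q.1 = u₀} ∩ {q : E × ℝ | ‖q.1‖ ^ 2 / 2 < q.2} := by
  ext q
  constructor
  · rintro ⟨p, ⟨hp1, hp2⟩, rfl⟩
    have hv2 : 0 < p.2 ^ 2 := pow_pos hp2 2
    rw [hT]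
    exact ⟨hp1, by show ‖p.1‖ ^ 2 / 2 < (‖p.1‖ ^ 2 + p.2 ^ 2) / 2; linarith⟩
  · rintro ⟨h1, h2⟩
    obtain ⟨v, hv, hv2⟩ := exists_v q.1 q.2 h2
    refine ⟨(q.1, v), ⟨h1, hv⟩, ?_⟩
    rw [hT]
    exact Prod.ext rfl (by show (‖q.1‖ ^ 2 + v ^ 2) / 2 = q.2; linarith)

lemma vertical_line_eq (q d : E × ℝ) (h1 : d.1 = 0) (h2 : d.2 ≠ 0) :
    {x : E × ℝ | ∃ t : ℝ, x = q + t • d} = {p : E × ℝ | p.1 = q.1} := by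
  ext p
  simp only [Set.mem_setOf_eq, Prod.ext_iff, Prod.fst_add, Prod.snd_add,
    Prod.smul_fst, Prod.smul_snd, smul_eq_mul, h1, smul_zero, add_zero]
  constructor
  · rintro ⟨t, ha, _⟩; exact ha
  · intro ha
    exact ⟨(p.2 - q.2) / d.2, ha, by field_simp; ring⟩

end stmt6aux

/-- `T(u,v) = (u, (|u|²+v²)/2)` is a bijection of the upper half space onto the
epiparabola `W = {t > |s|²/2}` which maps Poincaré geodesics onto intersections
of straight lines with `W`, and conversely. -/
theorem stmt_6 {m : ℕ}
    (T : EuclideanSpace ℝ (Fin m) × ℝ → EuclideanSpace ℝ (Fin m) × ℝ)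
    (hT : ∀ p, T p = (p.1, (‖p.1‖ ^ 2 + p.2 ^ 2) / 2))
    (U W : Set (EuclideanSpace ℝ (Fin m) × ℝ))
    (hU : U = {p | 0 < p.2})
    (hW : W = {q | ‖q.1‖ ^ 2 / 2 < q.2}) :
    Set.BijOn T U W
      ∧ (∀ γ, stmt6.IsGeodesic γ → ∃ ℓ, stmt6.IsLine ℓ ∧ T '' γ = ℓ ∩ W)
      ∧ (∀ ℓ, stmt6.IsLine ℓ → (ℓ ∩ W).Nonempty →
          ∃ γ, stmt6.IsGeodesic γ ∧ T '' γ = ℓ ∩ W) := by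
  subst hU hW
  refine ⟨⟨?_, ?_, ?_⟩, ?_, ?_⟩
  · -- MapsTo
    intro p hp
    have hp0 : 0 < p.2 := hp
    have : 0 < p.2 ^ 2 := pow_pos hp0 2
    rw [hT]
    show ‖p.1‖ ^ 2 / 2 < (‖p.1‖ ^ 2 + p.2 ^ 2) / 2
    linarith
  · -- InjOn
    intro p hp p' hp' h
    have hp0 : 0 < p.2 := hp
    have hp0' : 0 < p'.2 := hp'
    rw [hT, hT, Prod.ext_iff] at h
    obtain ⟨h1, h2⟩ := h
    simp only at h1 h2
    have hsq : p.2 ^ 2 = p'.2 ^ 2 := by rw [h1] at h2; linarith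
    have hp2 : p.2 = p'.2 := by nlinarith [hsq, hp0, hp0']
    exact Prod.ext h1 hp2
  · -- SurjOn
    intro q hq
    obtain ⟨v, hv, hv2⟩ := stmt6aux.exists_v q.1 q.2 hq
    refine ⟨(q.1, v), hv, ?_⟩
    rw [hT]
    exact Prod.ext rfl (by show (‖q.1‖ ^ 2 + v ^ 2) / 2 = q.2; linarith)
  · -- geodesic → line
    rintro γ (⟨u₀, rfl⟩ | ⟨L, a, r, hL, haL, hr, rfl⟩)
    · refine ⟨{x | ∃ t : ℝ, x = ((u₀, (0:ℝ)) : EuclideanSpace ℝ (Fin m) × ℝ) +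
          t • ((0 : EuclideanSpace ℝ (Fin m)), (1:ℝ))},
        ⟨_, _, fun h => one_ne_zero (congrArg Prod.snd h), rfl⟩, ?_⟩
      rw [stmt6aux.vertical_image T hT u₀,
        stmt6aux.vertical_line_eq (u₀, (0:ℝ)) ((0 : EuclideanSpace ℝ (Fin m)), (1:ℝ))
          rfl one_ne_zero]
    · exact ⟨_, stmt6aux.graph_isLine L hL a ((r ^ 2 - ‖a‖ ^ 2) / 2),
        stmt6aux.semicircle_image T hT L a r⟩
  · -- line → geodesic
    rintro ℓ ⟨q, d, hd, rfl⟩ ⟨x, ⟨tx, hx⟩, hxW⟩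
    by_cases hd1 : d.1 = 0
    · -- vertical line
      have hd2 : d.2 ≠ 0 := fun h => hd (Prod.ext hd1 h)
      refine ⟨{p | p.1 = q.1 ∧ 0 < p.2}, Or.inl ⟨q.1, rfl⟩, ?_⟩
      rw [stmt6aux.vertical_image T hT q.1, stmt6aux.vertical_line_eq q d hd1 hd2]
    · -- non-vertical line
      have hnd : (0:ℝ) < ‖d.1‖ ^ 2 := pow_pos (norm_pos_iff.mpr hd1) 2
      set s₀ : ℝ := (d.2 - ⟪d.1, q.1⟫) / ‖d.1‖ ^ 2 with hs₀
      set a : EuclideanSpace ℝ (Fin m) := q.1 + s₀ • d.1 with ha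
      set c : ℝ := q.2 - ⟪q.1, a⟫ with hc
      have hda : ⟪d.1, a⟫ = d.2 := by
        rw [ha, inner_add_right, real_inner_smul_right, real_inner_self_eq_norm_sq, hs₀]
        field_simp
        ring
      have hline : ∀ t : ℝ, q.2 + t * d.2 = ⟪q.1 + t • d.1, a⟫ + c := by
        intro t
        rw [inner_add_left, real_inner_smul_left, hda, hc]
        ring
      have hxpos : 0 < ‖a‖ ^ 2 + 2 * c := by
        have h1 : x.2 = ⟪x.1, a⟫ + c := by
          rw [hx]
          simp only [Prod.fst_add, Prod.snd_add, Prod.smul_fst, Prod.smul_snd, smul_eq_mul]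
          exact hline tx
        have h2 : ‖x.1 - a‖ ^ 2 = ‖x.1‖ ^ 2 - 2 * ⟪x.1, a⟫ + ‖a‖ ^ 2 :=
          stmt6aux.norm_sub_sq' x.1 a
        have h3 : (0:ℝ) ≤ ‖x.1 - a‖ ^ 2 := by positivity
        have hxW' : ‖x.1‖ ^ 2 / 2 < x.2 := hxW
        linarith
      set r : ℝ := Real.sqrt (‖a‖ ^ 2 + 2 * c) with hrdef
      have hr : 0 < r := Real.sqrt_pos.mpr hxpos
      have hr2 : r ^ 2 = ‖a‖ ^ 2 + 2 * c := Real.sq_sqrt hxpos.le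
      have hcr : c = (r ^ 2 - ‖a‖ ^ 2) / 2 := by rw [hr2]; ring
      set L : Set (EuclideanSpace ℝ (Fin m)) := {y | ∃ t : ℝ, y = q.1 + t • d.1} with hLdef
      have hLline : stmt6.IsLine L := ⟨q.1, d.1, hd1, rfl⟩
      have haL : a ∈ L := ⟨s₀, ha⟩
      refine ⟨{p | p.1 ∈ L ∧ 0 < p.2 ∧ ‖p.1 - a‖ ^ 2 + p.2 ^ 2 = r ^ 2},
        Or.inr ⟨L, a, r, hLline, haL, hr, rfl⟩, ?_⟩
      rw [stmt6aux.semicircle_image T hT L a r]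
      congr 1
      rw [← hcr]
      ext p
      simp only [Set.mem_setOf_eq, hLdef, Prod.ext_iff, Prod.fst_add, Prod.snd_add,
        Prod.smul_fst, Prod.smul_snd, smul_eq_mul]
      constructor
      · rintro ⟨⟨t, h1⟩, h2⟩
        refine ⟨t, h1, ?_⟩
        rw [h2, h1]
        exact (hline t).symm
      · rintro ⟨t, h1, h2⟩
        refine ⟨⟨t, h1⟩, ?_⟩
        rw [h2, h1]
        exact hline t
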